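/- Let X and Z denote the 2×2 Pauli matrices X = [[0,1],[1,0]] and Z = [[1,0],[0,−1]], and let α, β be real numbers. Then every separable state σ on ℂ² ⊗ ℂ² satisfies −max(|α|, |β|) ≤ α·Tr((X⊗X)σ) + β·Tr((Z⊗Z)σ) ≤ max(|α|, |β|). Consequently any two-qubit density matrix ρ with |α·Tr((X⊗X)ρ) + β·Tr((Z⊗Z)ρ)| > max(|α|,|β|) is entangled (not separable). -/

import Mathlib

open Matrix
open Kronecker
open scoped BigOperators ComplexOrder

/-- The Pauli matrix `X`. -/
def PauliX : Matrix (Fin 2) (Fin 2) ℂ := !![0, 1; 1, 0]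

/-- The Pauli matrix `Y`. -/
def PauliY : Matrix (Fin 2) (Fin 2) ℂ := !![0, -Complex.I; Complex.I, 0]

/-- The Pauli matrix `Z`. -/
def PauliZ : Matrix (Fin 2) (Fin 2) ℂ := !![1, 0; 0, -1]

/-- A density matrix: Hermitian, positive semidefinite, trace one. -/
def IsDensityMatrix {n : Type*} [Fintype n] (ρ : Matrix n n ℂ) : Prop :=
  ρ.IsHermitian ∧ ρ.PosSemidef ∧ ρ.trace = 1

/-- A separable state on `ℂ² ⊗ ℂ²`: a finite convex combination of Kronecker
products of 2×2 density matrices. -/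
def IsSeparableState (σ : Matrix (Fin 2 × Fin 2) (Fin 2 × Fin 2) ℂ) : Prop :=
  ∃ (m : ℕ) (p : Fin m → ℝ) (ρA ρB : Fin m → Matrix (Fin 2) (Fin 2) ℂ),
    (∀ k, 0 ≤ p k) ∧ (∑ k, p k = 1) ∧
    (∀ k, IsDensityMatrix (ρA k)) ∧ (∀ k, IsDensityMatrix (ρB k)) ∧
    σ = ∑ k, (p k : ℂ) • (ρA k ⊗ₖ ρB k)

lemma bloch (ρ : Matrix (Fin 2) (Fin 2) ℂ) (h : IsDensityMatrix ρ) :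
    ∃ x z : ℝ, (PauliX * ρ).trace = (x : ℂ) ∧ (PauliZ * ρ).trace = (z : ℂ) ∧
      x ^ 2 + z ^ 2 ≤ 1 := by
  obtain ⟨hH, hP, hT⟩ := h
  set a : ℝ := (ρ 0 0).re with ha
  set d : ℝ := (ρ 1 1).re with hd
  set b : ℂ := ρ 0 1 with hb
  have h01 : ρ 0 1 = b := rfl
  have h10 : ρ 1 0 = star b := (hH.apply 1 0).symm
  have him0 : (ρ 0 0).im = 0 := Complex.conj_eq_iff_im.mp (hH.apply 0 0)
  have him1 : (ρ 1 1).im = 0 := Complex.conj_eq_iff_im.mp (hH.apply 1 1)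
  have h00 : ρ 0 0 = (a : ℂ) := Complex.ext (by simp [ha]) (by simp [him0])
  have h11 : ρ 1 1 = (d : ℂ) := Complex.ext (by simp [hd]) (by simp [him1])
  rw [Matrix.trace_fin_two] at hT
  have htr : a + d = 1 := by
    have : ((a + d : ℝ) : ℂ) = 1 := by push_cast; rw [← h00, ← h11]; exact hT
    exact_mod_cast this
  have quad : ∀ t : ℝ, 0 ≤ a * (t * t) + (2 * b.re) * t + d := by
    intro t
    have h0 := hP.dotProduct_mulVec_nonneg ![(t : ℂ), 1]
    obtain ⟨h0re, -⟩ := Complex.le_def.mp h0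
    simp [dotProduct, Matrix.mulVec, Fin.sum_univ_two, h10, h01, h00, h11,
      Complex.add_re, Complex.mul_re, Complex.star_def] at h0re
    nlinarith [h0re]
  have hdisc := discrim_le_zero quad
  rw [discrim] at hdisc
  refine ⟨2 * b.re, a - d, ?_, ?_, ?_⟩
  · simp [PauliX, Matrix.trace_fin_two, Matrix.mul_apply, Matrix.vecMul, dotProduct,
      Fin.sum_univ_two, h10, h01]
    rw [add_comm, Complex.add_conj]; push_cast; ring
  · simp [PauliZ, Matrix.trace_fin_two, Matrix.mul_apply, Matrix.vecMul, dotProduct,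
      Fin.sum_univ_two, h00, h11]
    ring
  · nlinarith [hdisc, htr]

lemma cs_bound (α β xA zA xB zB : ℝ) (hA : xA ^ 2 + zA ^ 2 ≤ 1) (hB : xB ^ 2 + zB ^ 2 ≤ 1) :
    |α * (xA * xB) + β * (zA * zB)| ≤ max |α| |β| := by
  set M := max |α| |β| with hM
  have hα : |α| ≤ M := le_max_left _ _
  have hβ : |β| ≤ M := le_max_right _ _
  have hM0 : 0 ≤ M := le_trans (abs_nonneg α) hα
  set t1 := xA * xB with ht1
  set t2 := zA * zB with ht2
  have key : |t1| + |t2| ≤ 1 := by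
    have hsq : (|t1| + |t2|) ^ 2 ≤ 1 := by
      have h12 : |t1| * |t2| = |xA * zB| * |xB * zA| := by
        rw [← abs_mul, ← abs_mul, ht1, ht2]; ring_nf
      have hAB : (xA ^ 2 + zA ^ 2) * (xB ^ 2 + zB ^ 2) ≤ 1 := by
        nlinarith [sq_nonneg xA, sq_nonneg zA, sq_nonneg xB, sq_nonneg zB]
      have e1 : |t1| ^ 2 = xA ^ 2 * xB ^ 2 := by rw [sq_abs, ht1]; ring
      have e2 : |t2| ^ 2 = zA ^ 2 * zB ^ 2 := by rw [sq_abs, ht2]; ring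
      have e3 : 2 * (|t1| * |t2|) ≤ xA ^ 2 * zB ^ 2 + xB ^ 2 * zA ^ 2 := by
        rw [h12]
        nlinarith [sq_nonneg (|xA * zB| - |xB * zA|), sq_abs (xA * zB), sq_abs (xB * zA)]
      nlinarith [e1, e2, e3, hAB]
    nlinarith [abs_nonneg t1, abs_nonneg t2]
  calc |α * t1 + β * t2| ≤ |α * t1| + |β * t2| := abs_add_le _ _
    _ = |α| * |t1| + |β| * |t2| := by rw [abs_mul α t1, abs_mul β t2]
    _ ≤ M * |t1| + M * |t2| := by gcongr
    _ = M * (|t1| + |t2|) := by ring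
    _ ≤ M * 1 := by gcongr
    _ = M := mul_one M

lemma sep_bound (α β : ℝ) (σ : Matrix (Fin 2 × Fin 2) (Fin 2 × Fin 2) ℂ)
    (hσ : IsSeparableState σ) :
    ∃ r : ℝ,
      (α : ℂ) * ((PauliX ⊗ₖ PauliX) * σ).trace
        + (β : ℂ) * ((PauliZ ⊗ₖ PauliZ) * σ).trace = (r : ℂ) ∧
      -max |α| |β| ≤ r ∧ r ≤ max |α| |β| := by
  obtain ⟨m, p, ρA, ρB, hp0, hp1, hA, hB, rfl⟩ := hσ
  choose xA zA hxA hzA hAle using fun k => bloch (ρA k) (hA k)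
  choose xB zB hxB hzB hBle using fun k => bloch (ρB k) (hB k)
  have etr : ∀ (P : Matrix (Fin 2) (Fin 2) ℂ) (f g : Fin m → ℝ),
      (∀ k, ((P * ρA k).trace = ((f k : ℝ) : ℂ)) ∧ (P * ρB k).trace = ((g k : ℝ) : ℂ)) →
      ((P ⊗ₖ P) * ∑ k, (p k : ℂ) • (ρA k ⊗ₖ ρB k)).trace
        = ((∑ k, p k * (f k * g k) : ℝ) : ℂ) := by
    intro P f g hfg
    rw [Matrix.mul_sum, Matrix.trace_sum]
    push_cast
    refine Finset.sum_congr rfl fun k _ => ?_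
    rw [Matrix.mul_smul, Matrix.trace_smul, ← Matrix.mul_kronecker_mul,
      Matrix.trace_kronecker, (hfg k).1, (hfg k).2, smul_eq_mul]
  have eX := etr PauliX xA xB fun k => ⟨hxA k, hxB k⟩
  have eZ := etr PauliZ zA zB fun k => ⟨hzA k, hzB k⟩
  refine ⟨∑ k, p k * (α * (xA k * xB k) + β * (zA k * zB k)), ?_, ?_, ?_⟩
  · rw [eX, eZ]
    push_cast [Finset.mul_sum]
    rw [← Finset.sum_add_distrib]
    exact Finset.sum_congr rfl fun k _ => by ring
  · have : ∀ k ∈ Finset.univ, p k * (-max |α| |β|) ≤ p k * (α * (xA k * xB k) + β * (zA k * zB k)) := by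
      intro k _
      have := cs_bound α β (xA k) (zA k) (xB k) (zB k) (hAle k) (hBle k)
      have h1 := (abs_le.mp this).1
      exact mul_le_mul_of_nonneg_left h1 (hp0 k)
    calc -max |α| |β| = ∑ k, p k * (-max |α| |β|) := by
          rw [← Finset.sum_mul, hp1, one_mul]
      _ ≤ _ := Finset.sum_le_sum this
  · have : ∀ k ∈ Finset.univ, p k * (α * (xA k * xB k) + β * (zA k * zB k)) ≤ p k * max |α| |β| := by
      intro k _
      have := cs_bound α β (xA k) (zA k) (xB k) (zB k) (hAle k) (hBle k)
      exact mul_le_mul_of_nonneg_left (abs_le.mp this).2 (hp0 k)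
    calc _ ≤ ∑ k, p k * max |α| |β| := Finset.sum_le_sum this
      _ = max |α| |β| := by rw [← Finset.sum_mul, hp1, one_mul]

/-- For real `α, β`, every separable two-qubit state `σ` satisfies
`−max(|α|,|β|) ≤ α⟨X⊗X⟩_σ + β⟨Z⊗Z⟩_σ ≤ max(|α|,|β|)`; consequently any density
matrix `ρ` with `|α⟨X⊗X⟩_ρ + β⟨Z⊗Z⟩_ρ| > max(|α|,|β|)` is not separable. -/
theorem stmt6 (α β : ℝ) :
    (∀ σ : Matrix (Fin 2 × Fin 2) (Fin 2 × Fin 2) ℂ, IsSeparableState σ →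
      ∃ r : ℝ,
        (α : ℂ) * ((PauliX ⊗ₖ PauliX) * σ).trace
          + (β : ℂ) * ((PauliZ ⊗ₖ PauliZ) * σ).trace = (r : ℂ) ∧
        -max |α| |β| ≤ r ∧ r ≤ max |α| |β|) ∧
    (∀ ρ : Matrix (Fin 2 × Fin 2) (Fin 2 × Fin 2) ℂ, IsDensityMatrix ρ →
      max |α| |β| <
        ‖(α : ℂ) * ((PauliX ⊗ₖ PauliX) * ρ).trace
          + (β : ℂ) * ((PauliZ ⊗ₖ PauliZ) * ρ).trace‖ →
      ¬ IsSeparableState ρ) := by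
  refine ⟨sep_bound α β, fun ρ _ hlt hsep => ?_⟩
  obtain ⟨r, hr, hlo, hhi⟩ := sep_bound α β ρ hsep
  rw [hr] at hlt
  rw [Complex.norm_real] at hlt
  exact absurd (abs_le.mpr ⟨hlo, hhi⟩) (not_le.mpr hlt)
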